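/- Let (A,φ) with operators T_i, T_i^*, T_i′ satisfy conditions (C1), (C3) and (C4). If i ∈ ℕ^r is a tuple whose kernel ker i contains a singleton block, then φ(T_{i(1)}^{ε(1)} ⋯ T_{i(r)}^{ε(r)}) = 0 for every ε ∈ {1,*,′}^r. -/

import Mathlib

open Filter
open scoped BigOperators Classical

/-- The three kinds of labels `1, ∗, ′` for the operators. -/
inductive Eps : Type
  | one
  | star
  | prime
  deriving DecidableEq

/-- `Teps T T' ε i` is the operator `T_i^ε`. -/
def Teps {A : Type*} [Ring A] [StarRing A] (T T' : ℕ → A) : Eps → ℕ → A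
  | Eps.one, i => T i
  | Eps.star, i => star (T i)
  | Eps.prime, i => T' i

/-- The ordered product `T_{i(1)}^{ε(1)} ⋯ T_{i(r)}^{ε(r)}`. -/
def prodT {A : Type*} [Ring A] [StarRing A] (T T' : ℕ → A) {r : ℕ}
    (ε : Fin r → Eps) (i : Fin r → ℕ) : A :=
  (List.ofFn fun j => Teps T T' (ε j) (i j)).prod

/-- `ker i = π` for a set partition `π` of `[r]`, encoded as a setoid on `Fin r`. -/
def kerEq {r : ℕ} (i : Fin r → ℕ) (π : Setoid (Fin r)) : Prop :=
  ∀ k l, i k = i l ↔ π.r k l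

/-- Condition (C1): vanishing means and vanishing of all second mixed moments except
`φ(T_i^* T_i)` and `φ(T_i^* T_i′)`. -/
def C1 {A : Type*} [Ring A] [Algebra ℂ A] [StarRing A]
    (φ : A →ₗ[ℂ] ℂ) (T T' : ℕ → A) : Prop :=
  (∀ (i : ℕ) (e : Eps), φ (Teps T T' e i) = 0) ∧
  (∀ (i : ℕ) (e e' : Eps), ¬ (e = Eps.star ∧ (e' = Eps.one ∨ e' = Eps.prime)) →
    φ (Teps T T' e i * Teps T T' e' i) = 0)

/-- Condition (C2): uniform bounds for moments with a fixed kernel. -/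
def C2 {A : Type*} [Ring A] [Algebra ℂ A] [StarRing A]
    (φ : A →ₗ[ℂ] ℂ) (T T' : ℕ → A) : Prop :=
  ∀ (r : ℕ) (π : Setoid (Fin r)), ∃ ρ : ℝ, 0 ≤ ρ ∧
    ∀ (ε : Fin r → Eps) (i : Fin r → ℕ), kerEq i π →
      ‖φ (prodT T T' ε i)‖ ≤ ρ

/-- Condition (C3): the state factors over interval partitions.  A word whose kernel is an
interval partition is presented as a concatenation of groups, each group having a constant
index, different groups having distinct indices. -/
def C3 {A : Type*} [Ring A] [Algebra ℂ A] [StarRing A]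
    (φ : A →ₗ[ℂ] ℂ) (T T' : ℕ → A) : Prop :=
  ∀ G : List (List (Eps × ℕ)),
    (∀ g ∈ G, g ≠ [] ∧ ∃ m, ∀ x ∈ g, Prod.snd x = m) →
    (G.Pairwise fun g₁ g₂ => ∀ x₁ ∈ g₁, ∀ x₂ ∈ g₂, Prod.snd x₁ ≠ Prod.snd x₂) →
    φ ((G.flatten.map fun x => Teps T T' x.1 x.2).prod) =
      (G.map fun g => φ ((g.map fun x => Teps T T' x.1 x.2).prod)).prod

/-- Condition (C4): commutation relations `T_i^ε T_j^{ε'} = Q_{ε,ε'}(i,j) T_j^{ε'} T_i^ε`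
for `i ≠ j`. -/
def C4 {A : Type*} [Ring A] [Algebra ℂ A] [StarRing A]
    (T T' : ℕ → A) (Q : Eps → Eps → ℕ → ℕ → ℝ) : Prop :=
  ∀ (i j : ℕ), i ≠ j → ∀ (e e' : Eps),
    Teps T T' e i * Teps T T' e' j = (Q e e' i j : ℂ) • (Teps T T' e' j * Teps T T' e i)

/-- A pair partition of `[m]`, encoded as a fixed-point-free involution `p`:
the blocks are the sets `{x, p x}`. -/
def IsPairing {m : ℕ} (p : Fin m → Fin m) : Prop :=
  ∀ x, p (p x) = x ∧ p x ≠ x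

/-- A coloring `f : π → {±1}` of the blocks (encoded pointwise, constant on blocks;
`true` stands for the color `1`, `false` for the color `-1`). -/
def IsColoring {m : ℕ} (p : Fin m → Fin m) (f : Fin m → Bool) : Prop :=
  ∀ x, f (p x) = f x

/-- Membership of a colored pair partition in `P^B_{2,ε}`: on each block `{z, w}` with
`z < w` one has `ε(z) = ∗` and `ε(w) = 1` resp. `′` according to the color. -/
def EpsCompat {m : ℕ} (ε : Fin m → Eps) (p : Fin m → Fin m) (f : Fin m → Bool) : Prop :=
  ∀ x, x < p x → ε x = Eps.star ∧ ε (p x) = (if f x then Eps.one else Eps.prime)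

/-- `ker i = π` for the pair partition encoded by the involution `p`. -/
def kerPair {m : ℕ} (i : Fin m → ℕ) (p : Fin m → Fin m) : Prop :=
  ∀ k l, i k = i l ↔ (k = l ∨ p k = l)

/-- The coefficient `Ξ(π_f, i)`: a product of commutation coefficients over crossing pairs
of blocks and over nesting pairs of blocks.  Here `a, b` run over left legs of blocks. -/
noncomputable def Xi (Q : Eps → Eps → ℕ → ℕ → ℝ) {m : ℕ}
    (p : Fin m → Fin m) (f : Fin m → Bool) (i : Fin m → ℕ) : ℝ :=
  (∏ a : Fin m, ∏ b : Fin m,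
    if a < p a ∧ b < p b ∧ a < b ∧ b < p a ∧ p a < p b then
      Q Eps.star (if f a then Eps.one else Eps.prime) (i b) (i (p a)) else 1) *
  (∏ a : Fin m, ∏ b : Fin m,
    if a < p a ∧ b < p b ∧ a < b ∧ p b < p a then
      Q Eps.star Eps.star (i a) (i b) *
        Q Eps.star (if f b then Eps.one else Eps.prime) (i a) (i (p b)) else 1)

/-- The quantity whose limit (as `N → ∞`) is `λ_{π_f}` in condition (C5):
`N^{-n} ∑_{i ∈ [N]^{2n}, ker i = π} Ξ(π_f,i) ∏_{f=1} φ(T^*T) ∏_{f=-1} φ(T^*T')`. -/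
noncomputable def Ysum {A : Type*} [Ring A] [Algebra ℂ A] [StarRing A]
    (φ : A →ₗ[ℂ] ℂ) (T T' : ℕ → A) (Q : Eps → Eps → ℕ → ℕ → ℝ)
    (n N : ℕ) (p : Fin (2 * n) → Fin (2 * n)) (f : Fin (2 * n) → Bool) : ℂ :=
  ((N : ℂ) ^ n)⁻¹ *
    ∑ i ∈ (Fintype.piFinset fun _ : Fin (2 * n) => Finset.Icc 1 N).filter
        (fun i => kerPair i p),
      ((Xi Q p f i : ℝ) : ℂ) *
        (∏ a : Fin (2 * n),
          if a < p a ∧ f a = true then φ (star (T (i a)) * T (i (p a))) else 1) *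
        (∏ a : Fin (2 * n),
          if a < p a ∧ f a = false then φ (star (T (i a)) * T' (i (p a))) else 1)

/-- The normalized sum `S_N^ε = (T_1^ε + ⋯ + T_N^ε)/√N`. -/
noncomputable def SN {A : Type*} [Ring A] [Algebra ℂ A] [StarRing A]
    (T T' : ℕ → A) (e : Eps) (N : ℕ) : A :=
  ((Real.sqrt N : ℂ))⁻¹ • ∑ k ∈ Finset.Icc 1 N, Teps T T' e k



section scratch
variable {A : Type*} [Ring A] [Algebra ℂ A] [StarRing A]

/-- product of a word of letters -/
def wprod (T T' : ℕ → A) (L : List (Eps × ℕ)) : A :=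
  (L.map fun x => Teps T T' x.1 x.2).prod

lemma wprod_cons (T T' : ℕ → A) (x : Eps × ℕ) (L : List (Eps × ℕ)) :
    wprod T T' (x :: L) = Teps T T' x.1 x.2 * wprod T T' L := by
  simp [wprod]

lemma winsert (T T' : ℕ → A) (Q : Eps → Eps → ℕ → ℕ → ℝ) (hC4 : C4 T T' Q)
    (x : Eps × ℕ) :
    ∀ L : List (Eps × ℕ), ∃ c : ℝ,
      wprod T T' (x :: L) =
        (c : ℂ) • wprod T T' (L.orderedInsert (fun a b => a.2 ≤ b.2) x) := by
  intro L
  induction L with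
  | nil => exact ⟨1, by simp [List.orderedInsert]⟩
  | cons y L ih =>
    by_cases h : x.2 ≤ y.2
    · exact ⟨1, by simp [List.orderedInsert, h]⟩
    · obtain ⟨c, hc⟩ := ih
      refine ⟨Q x.1 y.1 x.2 y.2 * c, ?_⟩
      have hne : x.2 ≠ y.2 := fun e => h (le_of_eq e)
      have hq := hC4 x.2 y.2 hne x.1 y.1
      rw [List.orderedInsert, if_neg h, wprod_cons, wprod_cons, ← mul_assoc, hq,
        smul_mul_assoc, mul_assoc, ← wprod_cons, hc, wprod_cons]
      rw [mul_smul_comm, smul_smul, Complex.ofReal_mul]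

lemma wsort (T T' : ℕ → A) (Q : Eps → Eps → ℕ → ℕ → ℝ) (hC4 : C4 T T' Q) :
    ∀ L : List (Eps × ℕ), ∃ c : ℝ,
      wprod T T' L =
        (c : ℂ) • wprod T T' (L.insertionSort (fun a b => a.2 ≤ b.2)) := by
  intro L
  induction L with
  | nil => exact ⟨1, by simp⟩
  | cons x L ih =>
    obtain ⟨c, hc⟩ := ih
    obtain ⟨c', hc'⟩ := winsert T T' Q hC4 x (L.insertionSort (fun a b => a.2 ≤ b.2))
    refine ⟨c * c', ?_⟩
    rw [List.insertionSort]
    calc wprod T T' (x :: L) = Teps T T' x.1 x.2 * wprod T T' L := wprod_cons T T' x L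
      _ = (c : ℂ) • wprod T T' (x :: List.insertionSort (fun a b => a.2 ≤ b.2) L) := by
          rw [hc, wprod_cons, mul_smul_comm]
      _ = (c : ℂ) • ((c' : ℂ) • wprod T T'
            (List.orderedInsert (fun a b => a.2 ≤ b.2) x
              (List.insertionSort (fun a b => a.2 ≤ b.2) L))) := by rw [hc']
      _ = _ := by rw [smul_smul, Complex.ofReal_mul]; rfl

lemma decomp : ∀ L : List (Eps × ℕ), L.Pairwise (fun a b => a.2 ≤ b.2) →
    ∃ G : List (List (Eps × ℕ)), G.flatten = L ∧
      (∀ g ∈ G, g ≠ [] ∧ ∃ m, ∀ x ∈ g, x.2 = m) ∧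
      G.Pairwise (fun g₁ g₂ => ∀ x₁ ∈ g₁, ∀ x₂ ∈ g₂, x₁.2 < x₂.2) := by
  intro L
  induction L with
  | nil => exact fun _ => ⟨[], by simp⟩
  | cons x L ih =>
    intro hp
    rw [List.pairwise_cons] at hp
    obtain ⟨hx, hL⟩ := hp
    obtain ⟨G, hflat, hconst, hpair⟩ := ih hL
    match G, hflat, hconst, hpair with
    | [], hflat, _, _ =>
      refine ⟨[[x]], by simp [← hflat], ?_, by simp⟩
      intro g hg
      rcases List.mem_singleton.1 hg with rfl
      refine ⟨by simp, x.2, ?_⟩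
      intro z hz
      rcases List.mem_singleton.1 hz with rfl
      rfl
    | g :: G', hflat, hconst, hpair =>
      obtain ⟨hgne, m, hm⟩ := hconst g (List.mem_cons_self)
      obtain ⟨y, g', rfl⟩ := List.exists_cons_of_ne_nil hgne
      have hym : y.2 = m := hm y (List.mem_cons_self)
      have hyL : y ∈ L := by
        rw [← hflat]; exact List.mem_flatten.2 ⟨y :: g', List.mem_cons_self, List.mem_cons_self⟩
      by_cases hxm : x.2 = m
      · refine ⟨(x :: y :: g') :: G', by simp [← hflat], ?_, ?_⟩
        · intro g hg
          rcases List.mem_cons.1 hg with rfl | hg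
          · refine ⟨by simp, m, ?_⟩
            intro z hz
            rcases List.mem_cons.1 hz with rfl | hz
            · exact hxm
            · exact hm z hz
          · exact hconst g (List.mem_cons_of_mem _ hg)
        · rw [List.pairwise_cons] at hpair ⊢
          refine ⟨?_, hpair.2⟩
          intro g' hg' z hz w hw
          rcases List.mem_cons.1 hz with rfl | hz
          · rw [hxm, ← hym]
            exact hpair.1 g' hg' y (List.mem_cons_self) w hw
          · exact hpair.1 g' hg' z hz w hw
      · refine ⟨[x] :: (y :: g') :: G', by simp [← hflat], ?_, ?_⟩
        · intro g hg
          rcases List.mem_cons.1 hg with rfl | hg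
          · refine ⟨by simp, x.2, ?_⟩
            intro z hz
            rcases List.mem_singleton.1 hz with rfl
            rfl
          · exact hconst g hg
        · rw [List.pairwise_cons]
          refine ⟨?_, hpair⟩
          intro h hh z hz w hw
          rcases List.mem_singleton.1 hz with rfl
          have hxlt : z.2 < m := lt_of_le_of_ne (hym ▸ hx y hyL) hxm
          rcases List.mem_cons.1 hh with rfl | hh
          · exact lt_of_lt_of_le hxlt (le_of_eq (hm w hw).symm)
          · calc z.2 < m := hxlt
              _ = y.2 := hym.symm
              _ < w.2 := List.pairwise_cons.1 hpair |>.1 h hh y (List.mem_cons_self) w hw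

end scratch
/-- under conditions (C1), (C3), (C4), if the kernel of the tuple `i`
contains a singleton block, then `φ(T_{i(1)}^{ε(1)} ⋯ T_{i(r)}^{ε(r)}) = 0` for every `ε`. -/
theorem stmt2 {A : Type*} [Ring A] [Algebra ℂ A] [StarRing A]
    (φ : A →ₗ[ℂ] ℂ) (hφ1 : φ 1 = 1) (T T' : ℕ → A) (Q : Eps → Eps → ℕ → ℕ → ℝ)
    (hC1 : C1 φ T T') (hC3 : C3 φ T T') (hC4 : C4 T T' Q)
    (r : ℕ) (i : Fin r → ℕ)
    (hsing : ∃ k : Fin r, ∀ l : Fin r, l ≠ k → i l ≠ i k) :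
    ∀ ε : Fin r → Eps, φ (prodT T T' ε i) = 0 := by
  intro ε
  obtain ⟨k, hk⟩ := hsing
  classical
  set L0 : List (Eps × ℕ) := List.ofFn (fun j => (ε j, i j)) with hL0
  have hprod : prodT T T' ε i = wprod T T' L0 := by
    rw [prodT, wprod, hL0, List.map_ofFn]
    rfl
  haveI : IsTotal (Eps × ℕ) (fun a b => a.2 ≤ b.2) := ⟨fun a b => le_total a.2 b.2⟩
  haveI : IsTrans (Eps × ℕ) (fun a b => a.2 ≤ b.2) := ⟨fun _ _ _ h h' => le_trans h h'⟩
  set L : List (Eps × ℕ) := L0.insertionSort (fun a b => a.2 ≤ b.2) with hLdef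
  obtain ⟨c, hc⟩ := wsort T T' Q hC4 L0
  have hperm : L.Perm L0 := List.perm_insertionSort _ _
  have hsorted : L.Pairwise (fun a b => a.2 ≤ b.2) :=
    List.pairwise_insertionSort _ _
  obtain ⟨G, hflat, hconst, hpairlt⟩ := decomp L hsorted
  set p : Eps × ℕ → Bool := fun x => decide (x.2 = i k) with hp
  have hcount : L.countP p = 1 := by
    rw [List.Perm.countP_eq _ hperm, hL0, List.ofFn_eq_map, List.countP_map]
    have hcg : List.countP (p ∘ fun j => (ε j, i j)) (List.finRange r) =
        List.countP (fun j => j == k) (List.finRange r) := by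
      apply List.countP_congr
      intro j _
      simp only [Function.comp, hp, decide_eq_true_eq, beq_iff_eq]
      constructor
      · intro h
        by_contra hj
        exact hk j hj h
      · rintro rfl; rfl
    rw [hcg]
    have : List.countP (fun j => j == k) (List.finRange r) =
        List.count k (List.finRange r) := rfl
    rw [this]
    exact List.count_eq_one_of_mem (List.nodup_finRange r) (List.mem_finRange k)
  have hex : ∃ x ∈ L, p x = true := List.countP_pos_iff.1 (by omega)
  obtain ⟨x0, hx0L, hx0m⟩ := hex
  rw [hp, decide_eq_true_eq] at hx0m
  obtain ⟨g, hgG, hx0g⟩ := List.mem_flatten.1 (by rw [hflat]; exact hx0L)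
  obtain ⟨hgne, m, hmg⟩ := hconst g hgG
  have hmik : m = i k := by rw [← hmg x0 hx0g, hx0m]
  have hall : L.countP p = (G.map (List.countP p)).sum := by
    rw [← hflat, List.countP_flatten]
  have hglen : g.countP p = g.length :=
    List.countP_eq_length.2 (fun a ha => by simp [hp, hmg a ha, hmik])
  have hle : g.countP p ≤ (G.map (List.countP p)).sum :=
    List.single_le_sum (by simp) _ (List.mem_map_of_mem hgG)
  have hgpos : 0 < g.length := List.length_pos_iff.2 hgne
  have hg1 : g.length = 1 := by omega
  obtain ⟨x1, hx1⟩ := List.length_eq_one_iff.1 hg1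
  have hpairne : G.Pairwise fun g₁ g₂ => ∀ x₁ ∈ g₁, ∀ x₂ ∈ g₂, Prod.snd x₁ ≠ Prod.snd x₂ :=
    hpairlt.imp (fun h x₁ hx₁ x₂ hx₂ => ne_of_lt (h x₁ hx₁ x₂ hx₂))
  have hfac := hC3 G hconst hpairne
  have hφg : φ ((g.map fun x => Teps T T' x.1 x.2).prod) = 0 := by
    rw [hx1]
    simp only [List.map_cons, List.map_nil, List.prod_singleton]
    exact hC1.1 x1.2 x1.1
  have hmem : (0 : ℂ) ∈ G.map fun g => φ ((g.map fun x => Teps T T' x.1 x.2).prod) := by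
    rw [← hφg]
    exact List.mem_map_of_mem hgG
  have hLzero : φ (wprod T T' L) = 0 := by
    rw [wprod, ← hflat, hfac]
    exact List.prod_eq_zero hmem
  rw [hprod, hc, map_smul, ← hLdef, hLzero, smul_zero]
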